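/- Let m be a positive integer such that the 2-adic valuation ν₂(m) is odd, and let k ≥ 2 be even. Then there are no coprime positive integers a, b with |a - b| = k such that, writing d = gcd(b,m), b = d·b', m = d·m', both a·m' and b' are k-th powers of integers. -/

import Mathlib

theorem stmt_11 (m k : ℕ) (hm : 0 < m) (hv : Odd (padicValNat 2 m))
    (hk2 : 2 ≤ k) (hke : Even k) :
    ¬ ∃ a b b' m' u v : ℕ, 0 < a ∧ 0 < b ∧ Nat.Coprime a b ∧
        ((a : ℤ) - (b : ℤ)).natAbs = k ∧
        b = Nat.gcd b m * b' ∧ m = Nat.gcd b m * m' ∧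
        a * m' = u ^ k ∧ b' = v ^ k := by
  rintro ⟨a, b, b', m', u, v, ha, hb, hcop, habs, hb', hm', hu, hv'⟩
  haveI : Fact (Nat.Prime 2) := ⟨Nat.prime_two⟩
  -- a and b have the same parity
  have hk : Even (((a : ℤ) - b).natAbs) := habs ▸ hke
  have hab : Even a ↔ Even b := by
    rw [Int.natAbs_even, Int.even_sub] at hk
    simpa [Int.even_coe_nat] using hk
  have hao : ¬ Even a := by
    intro hea
    have heb := hab.mp hea
    have h2 : 2 ∣ Nat.gcd a b := Nat.dvd_gcd hea.two_dvd heb.two_dvd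
    rw [hcop] at h2
    omega
  have hbo : ¬ Even b := fun h => hao (hab.mpr h)
  set d := Nat.gcd b m with hd
  have hd0 : 0 < d := Nat.gcd_pos_of_pos_left _ hb
  have hm'0 : 0 < m' := by
    rcases Nat.eq_zero_or_pos m' with h | h
    · rw [h, Nat.mul_zero] at hm'; omega
    · exact h
  have hu0 : u ≠ 0 := by
    intro h
    rw [h] at hu
    rw [zero_pow (by omega : k ≠ 0)] at hu
    have := Nat.mul_pos ha hm'0
    omega
  have hdodd : ¬ 2 ∣ d := by
    intro h
    exact hbo (even_iff_two_dvd.mpr (h.trans (Nat.gcd_dvd_left b m)))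
  have haodd : ¬ 2 ∣ a := fun h => hao (even_iff_two_dvd.mpr h)
  have h1 : padicValNat 2 m = padicValNat 2 d + padicValNat 2 m' := by
    rw [hm']
    exact padicValNat.mul (by omega) (by omega)
  have h2 : padicValNat 2 d = 0 := padicValNat.eq_zero_of_not_dvd hdodd
  have h3 : padicValNat 2 a = 0 := padicValNat.eq_zero_of_not_dvd haodd
  have h4 : padicValNat 2 (a * m') = padicValNat 2 a + padicValNat 2 m' :=
    padicValNat.mul (by omega) (by omega)
  have h5 : padicValNat 2 (u ^ k) = k * padicValNat 2 u := padicValNat.pow u k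
  have h6 : Even (padicValNat 2 m') := by
    have : padicValNat 2 m' = k * padicValNat 2 u := by
      rw [← h5, ← hu, h4, h3, Nat.zero_add]
    rw [this]
    exact hke.mul_right _
  rw [← Nat.not_even_iff_odd, h1, h2, Nat.zero_add] at hv
  exact hv h6
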